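/- In the graph game on (G, C, s, R) constructed from the restricted quantified Boolean formula Q, the ∃-player has a winning strategy if and only if Q is true. -/

import Mathlib

namespace PhutballQBF

/-- A literal: a variable `xₗ` (`pos l`) or its negation `¬xₗ` (`neg l`). -/
inductive Lit where
  | pos (l : ℕ)
  | neg (l : ℕ)
deriving DecidableEq

/-- The index of the variable occurring in a literal. -/
def Lit.var : Lit → ℕ
  | .pos l => l
  | .neg l => l

/-- Evaluation of a literal under a Boolean assignment. -/
def Lit.eval (σ : ℕ → Bool) : Lit → Bool
  | .pos l => σ l
  | .neg l => !(σ l)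

/-- Well-formedness of the 3CNF `F = F₁ ∧ ⋯ ∧ F_m`: the literal `l_{i,j}` (for
`1 ≤ i ≤ m`, `1 ≤ j ≤ 3`) mentions one of the variables `x₁, …, xₙ`. -/
def LitWF (n m : ℕ) (lit : ℕ → ℕ → Lit) : Prop :=
  ∀ i j, 1 ≤ i → i ≤ m → 1 ≤ j → j ≤ 3 → 1 ≤ (lit i j).var ∧ (lit i j).var ≤ n

/-- The clause `Fᵢ = (l_{i,1} ∨ l_{i,2} ∨ l_{i,3})` evaluates to true under `σ`. -/
def ClauseTrue (lit : ℕ → ℕ → Lit) (i : ℕ) (σ : ℕ → Bool) : Prop :=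
  ∃ j, 1 ≤ j ∧ j ≤ 3 ∧ (lit i j).eval σ = true

/-- The 3CNF formula `F = F₁ ∧ ⋯ ∧ F_m` evaluates to true under `σ`. -/
def FTrue (lit : ℕ → ℕ → Lit) (m : ℕ) (σ : ℕ → Bool) : Prop :=
  ∀ i, 1 ≤ i → i ≤ m → ClauseTrue lit i σ

/-- `QAux P i k σ`: the quantified statement with `k` variables `x_i, …, x_{i+k-1}`
still to be quantified (existentially when the index is odd, universally when even),
the remaining variables having the values recorded in `σ`. -/
def QAux (P : (ℕ → Bool) → Prop) : ℕ → ℕ → (ℕ → Bool) → Prop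
  | _, 0, σ => P σ
  | i, k + 1, σ =>
      if i % 2 = 1 then ∃ b, QAux P (i + 1) k (Function.update σ i b)
      else ∀ b, QAux P (i + 1) k (Function.update σ i b)

/-- Truth of the restricted quantified Boolean formula
`Q = ∃x₁ ∀x₂ ∃x₃ ⋯ ∀xₙ F(x₁, …, xₙ)`. -/
def QTrue (n m : ℕ) (lit : ℕ → ℕ → Lit) : Prop :=
  QAux (FTrue lit m) 1 n (fun _ => false)

/-- The vertices of the graph `G` built from `Q` (with natural-number indices;
`g 0` is the extra vertex `g₀`). -/
inductive Vtx where
  | a (i : ℕ) | b (i : ℕ) | c (i : ℕ) | d (i : ℕ) | e (i : ℕ) | f (i : ℕ) | g (i : ℕ)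
  | x (i : ℕ) | y (i : ℕ) | z (i : ℕ) | w (i : ℕ) (j : ℕ)
deriving DecidableEq

/-- A directed edge. -/
abbrev Edge := Vtx × Vtx

/-- The edge set `E(G)` of the graph `G` constructed from `Q` (with `n` variables and
`m` clauses): the variable components `G(xᵢ)`, the connecting edges `(gᵢ, aᵢ₊₁)` for
`i = 0, …, n-1`, the edge `(gₙ, x₁)`, and the formula component `G(F)`. -/
def EG (n m : ℕ) : Set Edge :=
  { p | (∃ i, 1 ≤ i ∧ i ≤ n ∧
          (p = (Vtx.a i, Vtx.b i) ∨ p = (Vtx.a i, Vtx.c i) ∨ p = (Vtx.b i, Vtx.e i) ∨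
           p = (Vtx.c i, Vtx.f i) ∨ p = (Vtx.e i, Vtx.d i) ∨ p = (Vtx.f i, Vtx.d i) ∨
           p = (Vtx.d i, Vtx.g i))) ∨
        (∃ i, i ≤ n - 1 ∧ p = (Vtx.g i, Vtx.a (i + 1))) ∨
        p = (Vtx.g n, Vtx.x 1) ∨
        (∃ i, 1 ≤ i ∧ i ≤ m ∧
          (p = (Vtx.x i, Vtx.y i) ∨ p = (Vtx.y i, Vtx.z i) ∨ p = (Vtx.z i, Vtx.w i 1) ∨
           p = (Vtx.w i 1, Vtx.w i 2) ∨ p = (Vtx.w i 2, Vtx.w i 3))) ∨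
        (∃ i, 1 ≤ i ∧ i ≤ m - 1 ∧ p = (Vtx.x i, Vtx.x (i + 1))) }

/-- The set `C = {g₀, g₁, …, g_{n-1}} ∪ {z₁, …, z_m}`. -/
def Cset (n m : ℕ) : Set Vtx :=
  { v | (∃ i, i ≤ n - 1 ∧ v = Vtx.g i) ∨ (∃ i, 1 ≤ i ∧ i ≤ m ∧ v = Vtx.z i) }

/-- The relation `R ⊆ V(G) × E(G)`: `(w_{i,j}, (bₗ, eₗ)) ∈ R` iff `l_{i,j} = xₗ`, and
`(w_{i,j}, (cₗ, fₗ)) ∈ R` iff `l_{i,j} = ¬xₗ`. -/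
def Rrel (lit : ℕ → ℕ → Lit) (m : ℕ) : Set (Vtx × Edge) :=
  { p | ∃ i j, 1 ≤ i ∧ i ≤ m ∧ 1 ≤ j ∧ j ≤ 3 ∧
        ((∃ l, lit i j = Lit.pos l ∧ p = (Vtx.w i j, (Vtx.b l, Vtx.e l))) ∨
         (∃ l, lit i j = Lit.neg l ∧ p = (Vtx.w i j, (Vtx.c l, Vtx.f l)))) }

/-- `Rinv R E = R⁻¹(E)`: the vertices pointing some edge of `E`. -/
def Rinv (R : Set (Vtx × Edge)) (E : Set Edge) : Set Vtx :=
  { v | ∃ e ∈ E, (v, e) ∈ R }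

/-- The set of (directed) edges traversed by a path given as its list of vertices. -/
def pathEdges (p : List Vtx) : Set Edge := { e | e ∈ p.zip p.tail }

/-- A legal move of the graph game from active vertex `u ∈ C` with current edge set `E`
along the directed path `p` (a list of at least two pairwise distinct vertices whose
consecutive pairs are edges of `E`), ending at a vertex `v ∈ C ∪ R⁻¹(E)`, with all
internal vertices of `p` outside `C ∪ R⁻¹(E)`; the resulting edge set `E'` is obtained
by deleting the edges of `p` from `E`. -/
def LegalMoveVia (C : Set Vtx) (R : Set (Vtx × Edge))
    (u : Vtx) (E : Set Edge) (v : Vtx) (E' : Set Edge) (p : List Vtx) : Prop :=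
  u ∈ C ∧ v ∈ C ∪ Rinv R E ∧
  2 ≤ p.length ∧ p.Nodup ∧
  p.head? = some u ∧ p.getLast? = some v ∧
  List.Chain' (fun a b => (a, b) ∈ E) p ∧
  (∀ w ∈ (p.drop 1).dropLast, w ∉ C ∪ Rinv R E) ∧
  E' = E \ pathEdges p

/-- A legal move from `(u, E)` to `(v, E')` (along some path). -/
def LegalMove (C : Set Vtx) (R : Set (Vtx × Edge))
    (u : Vtx) (E : Set Edge) (v : Vtx) (E' : Set Edge) : Prop :=
  ∃ p, LegalMoveVia C R u E v E' p

/-- `MoverWins C R true u E` says that the player to move at the position with active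
vertex `u` and current edge set `E` has a winning strategy; `MoverWins C R false u E`
says that the player to move loses whatever he does (in particular, if he has no legal
move he loses immediately; a move to a vertex of `R⁻¹(E)` wins the game for the mover). -/
inductive MoverWins (C : Set Vtx) (R : Set (Vtx × Edge)) : Bool → Vtx → Set Edge → Prop
  | winsNow {u E v E'} : LegalMove C R u E v E' → v ∈ Rinv R E →
      MoverWins C R true u E
  | winsLater {u E v E'} : LegalMove C R u E v E' → MoverWins C R false v E' →
      MoverWins C R true u E
  | loses {u E} :
      (∀ v E', LegalMove C R u E v E' → v ∉ Rinv R E) →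
      (∀ v E', LegalMove C R u E v E' → MoverWins C R true v E') →
      MoverWins C R false u E

/-- The two players of the graph game. -/
inductive Player where
  | ex | fa
deriving DecidableEq

/-- The opponent of a player. -/
def Player.other : Player → Player
  | .ex => .fa
  | .fa => .ex

/-- A (maximal) play of the graph game on `(G, C, s, R)` starting from active vertex `s`
and edge set `E0`, with the ∃-player moving first.  `act k` and `edg k` are the active
vertex and edge set after `k` moves, `turn k` is the player who makes the `(k+1)`-st
move, and `len` is the total number of moves.  The play stops either because its last
move reached a vertex of `R⁻¹(E)` (the mover wins) or because the player to move has no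
legal move (he loses); before that, no move may end in `R⁻¹(E)` without stopping. -/
structure Play (C : Set Vtx) (R : Set (Vtx × Edge)) (s : Vtx) (E0 : Set Edge) where
  len : ℕ
  act : ℕ → Vtx
  edg : ℕ → Set Edge
  turn : ℕ → Player
  init_act : act 0 = s
  init_edg : edg 0 = E0
  init_turn : turn 0 = Player.ex
  turn_alt : ∀ k, turn (k + 1) = (turn k).other
  step : ∀ k, k < len → LegalMove C R (act k) (edg k) (act (k + 1)) (edg (k + 1))
  not_over : ∀ k, k + 1 < len → act (k + 1) ∉ Rinv R (edg k)
  maximal : (0 < len ∧ act len ∈ Rinv R (edg (len - 1))) ∨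
            (∀ v E', ¬ LegalMove C R (act len) (edg len) v E')



/-! ### Auxiliary development -/

section Aux

variable {n m : ℕ} {lit : ℕ → ℕ → Lit}

/-! #### Successor lemmas for `EG` -/

lemma succ_g {i : ℕ} {v : Vtx} (h : (Vtx.g i, v) ∈ EG n m) :
    (i ≤ n - 1 ∧ v = Vtx.a (i + 1)) ∨ (i = n ∧ v = Vtx.x 1) := by
  simp only [EG, Set.mem_setOf_eq, Prod.mk.injEq] at h
  rcases h with ⟨l, h1, h2, h⟩ | ⟨l, h1, h⟩ | h | ⟨l, h1, h2, h⟩ | ⟨l, h1, h2, h⟩ <;>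
    simp_all

lemma succ_a {i : ℕ} {v : Vtx} (h : (Vtx.a i, v) ∈ EG n m) :
    1 ≤ i ∧ i ≤ n ∧ (v = Vtx.b i ∨ v = Vtx.c i) := by
  simp only [EG, Set.mem_setOf_eq, Prod.mk.injEq] at h
  rcases h with ⟨l, h1, h2, h⟩ | ⟨l, h1, h⟩ | h | ⟨l, h1, h2, h⟩ | ⟨l, h1, h2, h⟩ <;>
    try simp_all
  rcases h with ⟨rfl, rfl⟩ | ⟨rfl, rfl⟩ <;> simp_all

lemma succ_b {i : ℕ} {v : Vtx} (h : (Vtx.b i, v) ∈ EG n m) :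
    1 ≤ i ∧ i ≤ n ∧ v = Vtx.e i := by
  simp only [EG, Set.mem_setOf_eq, Prod.mk.injEq] at h
  rcases h with ⟨l, h1, h2, h⟩ | ⟨l, h1, h⟩ | h | ⟨l, h1, h2, h⟩ | ⟨l, h1, h2, h⟩ <;>
    simp_all

lemma succ_c {i : ℕ} {v : Vtx} (h : (Vtx.c i, v) ∈ EG n m) :
    1 ≤ i ∧ i ≤ n ∧ v = Vtx.f i := by
  simp only [EG, Set.mem_setOf_eq, Prod.mk.injEq] at h
  rcases h with ⟨l, h1, h2, h⟩ | ⟨l, h1, h⟩ | h | ⟨l, h1, h2, h⟩ | ⟨l, h1, h2, h⟩ <;>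
    simp_all

lemma succ_e {i : ℕ} {v : Vtx} (h : (Vtx.e i, v) ∈ EG n m) :
    1 ≤ i ∧ i ≤ n ∧ v = Vtx.d i := by
  simp only [EG, Set.mem_setOf_eq, Prod.mk.injEq] at h
  rcases h with ⟨l, h1, h2, h⟩ | ⟨l, h1, h⟩ | h | ⟨l, h1, h2, h⟩ | ⟨l, h1, h2, h⟩ <;>
    simp_all

lemma succ_f {i : ℕ} {v : Vtx} (h : (Vtx.f i, v) ∈ EG n m) :
    1 ≤ i ∧ i ≤ n ∧ v = Vtx.d i := by
  simp only [EG, Set.mem_setOf_eq, Prod.mk.injEq] at h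
  rcases h with ⟨l, h1, h2, h⟩ | ⟨l, h1, h⟩ | h | ⟨l, h1, h2, h⟩ | ⟨l, h1, h2, h⟩ <;>
    simp_all

lemma succ_d {i : ℕ} {v : Vtx} (h : (Vtx.d i, v) ∈ EG n m) :
    1 ≤ i ∧ i ≤ n ∧ v = Vtx.g i := by
  simp only [EG, Set.mem_setOf_eq, Prod.mk.injEq] at h
  rcases h with ⟨l, h1, h2, h⟩ | ⟨l, h1, h⟩ | h | ⟨l, h1, h2, h⟩ | ⟨l, h1, h2, h⟩ <;>
    simp_all

lemma succ_x {i : ℕ} {v : Vtx} (h : (Vtx.x i, v) ∈ EG n m) :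
    (1 ≤ i ∧ i ≤ m ∧ v = Vtx.y i) ∨ (1 ≤ i ∧ i ≤ m - 1 ∧ v = Vtx.x (i + 1)) := by
  simp only [EG, Set.mem_setOf_eq, Prod.mk.injEq] at h
  rcases h with ⟨l, h1, h2, h⟩ | ⟨l, h1, h⟩ | h | ⟨l, h1, h2, h⟩ | ⟨l, h1, h2, h⟩ <;>
    simp_all

lemma succ_y {i : ℕ} {v : Vtx} (h : (Vtx.y i, v) ∈ EG n m) :
    1 ≤ i ∧ i ≤ m ∧ v = Vtx.z i := by
  simp only [EG, Set.mem_setOf_eq, Prod.mk.injEq] at h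
  rcases h with ⟨l, h1, h2, h⟩ | ⟨l, h1, h⟩ | h | ⟨l, h1, h2, h⟩ | ⟨l, h1, h2, h⟩ <;>
    simp_all

lemma succ_z {i : ℕ} {v : Vtx} (h : (Vtx.z i, v) ∈ EG n m) :
    1 ≤ i ∧ i ≤ m ∧ v = Vtx.w i 1 := by
  simp only [EG, Set.mem_setOf_eq, Prod.mk.injEq] at h
  rcases h with ⟨l, h1, h2, h⟩ | ⟨l, h1, h⟩ | h | ⟨l, h1, h2, h⟩ | ⟨l, h1, h2, h⟩ <;>
    simp_all

lemma succ_w {i j : ℕ} {v : Vtx} (h : (Vtx.w i j, v) ∈ EG n m) :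
    1 ≤ i ∧ i ≤ m ∧ ((j = 1 ∧ v = Vtx.w i 2) ∨ (j = 2 ∧ v = Vtx.w i 3)) := by
  simp only [EG, Set.mem_setOf_eq, Prod.mk.injEq] at h
  rcases h with ⟨l, h1, h2, h⟩ | ⟨l, h1, h⟩ | h | ⟨l, h1, h2, h⟩ | ⟨l, h1, h2, h⟩ <;>
    try simp_all
  rcases h with ⟨⟨rfl, rfl⟩, rfl⟩ | ⟨⟨rfl, rfl⟩, rfl⟩ <;> simp_all

/-! #### Membership lemmas for `EG` -/

lemma mem_EG_ab {i : ℕ} (h1 : 1 ≤ i) (h2 : i ≤ n) : (Vtx.a i, Vtx.b i) ∈ EG n m :=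
  Or.inl ⟨i, h1, h2, Or.inl rfl⟩
lemma mem_EG_ac {i : ℕ} (h1 : 1 ≤ i) (h2 : i ≤ n) : (Vtx.a i, Vtx.c i) ∈ EG n m :=
  Or.inl ⟨i, h1, h2, Or.inr (Or.inl rfl)⟩
lemma mem_EG_be {i : ℕ} (h1 : 1 ≤ i) (h2 : i ≤ n) : (Vtx.b i, Vtx.e i) ∈ EG n m :=
  Or.inl ⟨i, h1, h2, Or.inr (Or.inr (Or.inl rfl))⟩
lemma mem_EG_cf {i : ℕ} (h1 : 1 ≤ i) (h2 : i ≤ n) : (Vtx.c i, Vtx.f i) ∈ EG n m :=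
  Or.inl ⟨i, h1, h2, Or.inr (Or.inr (Or.inr (Or.inl rfl)))⟩
lemma mem_EG_ed {i : ℕ} (h1 : 1 ≤ i) (h2 : i ≤ n) : (Vtx.e i, Vtx.d i) ∈ EG n m :=
  Or.inl ⟨i, h1, h2, Or.inr (Or.inr (Or.inr (Or.inr (Or.inl rfl))))⟩
lemma mem_EG_fd {i : ℕ} (h1 : 1 ≤ i) (h2 : i ≤ n) : (Vtx.f i, Vtx.d i) ∈ EG n m :=
  Or.inl ⟨i, h1, h2, Or.inr (Or.inr (Or.inr (Or.inr (Or.inr (Or.inl rfl)))))⟩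
lemma mem_EG_dg {i : ℕ} (h1 : 1 ≤ i) (h2 : i ≤ n) : (Vtx.d i, Vtx.g i) ∈ EG n m :=
  Or.inl ⟨i, h1, h2, Or.inr (Or.inr (Or.inr (Or.inr (Or.inr (Or.inr rfl)))))⟩
lemma mem_EG_ga {i : ℕ} (h1 : i ≤ n - 1) : (Vtx.g i, Vtx.a (i + 1)) ∈ EG n m :=
  Or.inr (Or.inl ⟨i, h1, rfl⟩)
lemma mem_EG_gx : (Vtx.g n, Vtx.x 1) ∈ EG n m :=
  Or.inr (Or.inr (Or.inl rfl))
lemma mem_EG_xy {i : ℕ} (h1 : 1 ≤ i) (h2 : i ≤ m) : (Vtx.x i, Vtx.y i) ∈ EG n m :=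
  Or.inr (Or.inr (Or.inr (Or.inl ⟨i, h1, h2, Or.inl rfl⟩)))
lemma mem_EG_yz {i : ℕ} (h1 : 1 ≤ i) (h2 : i ≤ m) : (Vtx.y i, Vtx.z i) ∈ EG n m :=
  Or.inr (Or.inr (Or.inr (Or.inl ⟨i, h1, h2, Or.inr (Or.inl rfl)⟩)))
lemma mem_EG_zw {i : ℕ} (h1 : 1 ≤ i) (h2 : i ≤ m) : (Vtx.z i, Vtx.w i 1) ∈ EG n m :=
  Or.inr (Or.inr (Or.inr (Or.inl ⟨i, h1, h2, Or.inr (Or.inr (Or.inl rfl))⟩)))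
lemma mem_EG_w12 {i : ℕ} (h1 : 1 ≤ i) (h2 : i ≤ m) : (Vtx.w i 1, Vtx.w i 2) ∈ EG n m :=
  Or.inr (Or.inr (Or.inr (Or.inl ⟨i, h1, h2, Or.inr (Or.inr (Or.inr (Or.inl rfl)))⟩)))
lemma mem_EG_w23 {i : ℕ} (h1 : 1 ≤ i) (h2 : i ≤ m) : (Vtx.w i 2, Vtx.w i 3) ∈ EG n m :=
  Or.inr (Or.inr (Or.inr (Or.inl ⟨i, h1, h2, Or.inr (Or.inr (Or.inr (Or.inr rfl)))⟩)))
lemma mem_EG_xx {i : ℕ} (h1 : 1 ≤ i) (h2 : i ≤ m - 1) : (Vtx.x i, Vtx.x (i + 1)) ∈ EG n m :=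
  Or.inr (Or.inr (Or.inr (Or.inr ⟨i, h1, h2, rfl⟩)))

/-! #### `Cset` and `Rinv` membership -/

lemma Rinv_sub_w {E : Set Edge} {v : Vtx} (h : v ∈ Rinv (Rrel lit m) E) :
    ∃ i j, v = Vtx.w i j := by
  obtain ⟨e, _, hR⟩ := h
  obtain ⟨i, j, _, _, _, _, h | h⟩ := hR
  · obtain ⟨l, _, hp⟩ := h
    exact ⟨i, j, by simpa using congrArg Prod.fst hp⟩
  · obtain ⟨l, _, hp⟩ := h
    exact ⟨i, j, by simpa using congrArg Prod.fst hp⟩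

lemma mem_Cset_g {i : ℕ} (h : i ≤ n - 1) : Vtx.g i ∈ Cset n m := Or.inl ⟨i, h, rfl⟩

lemma mem_Cset_z {i : ℕ} (h1 : 1 ≤ i) (h2 : i ≤ m) : Vtx.z i ∈ Cset n m :=
  Or.inr ⟨i, h1, h2, rfl⟩

lemma notS_helper {E : Set Edge} {v : Vtx}
    (h1 : ∀ i, v ≠ Vtx.g i) (h2 : ∀ i, v ≠ Vtx.z i) (h3 : ∀ i j, v ≠ Vtx.w i j) :
    v ∉ Cset n m ∪ Rinv (Rrel lit m) E := by
  rintro (hC | hR)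
  · rcases hC with ⟨i, _, hv⟩ | ⟨i, _, _, hv⟩
    · exact h1 i hv
    · exact h2 i hv
  · obtain ⟨i, j, hv⟩ := Rinv_sub_w hR
    exact h3 i j hv

lemma notS_a {E : Set Edge} {i : ℕ} : Vtx.a i ∉ Cset n m ∪ Rinv (Rrel lit m) E :=
  notS_helper (by simp) (by simp) (by simp)
lemma notS_b {E : Set Edge} {i : ℕ} : Vtx.b i ∉ Cset n m ∪ Rinv (Rrel lit m) E :=
  notS_helper (by simp) (by simp) (by simp)
lemma notS_c {E : Set Edge} {i : ℕ} : Vtx.c i ∉ Cset n m ∪ Rinv (Rrel lit m) E :=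
  notS_helper (by simp) (by simp) (by simp)
lemma notS_d {E : Set Edge} {i : ℕ} : Vtx.d i ∉ Cset n m ∪ Rinv (Rrel lit m) E :=
  notS_helper (by simp) (by simp) (by simp)
lemma notS_e {E : Set Edge} {i : ℕ} : Vtx.e i ∉ Cset n m ∪ Rinv (Rrel lit m) E :=
  notS_helper (by simp) (by simp) (by simp)
lemma notS_f {E : Set Edge} {i : ℕ} : Vtx.f i ∉ Cset n m ∪ Rinv (Rrel lit m) E :=
  notS_helper (by simp) (by simp) (by simp)
lemma notS_x {E : Set Edge} {i : ℕ} : Vtx.x i ∉ Cset n m ∪ Rinv (Rrel lit m) E :=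
  notS_helper (by simp) (by simp) (by simp)
lemma notS_y {E : Set Edge} {i : ℕ} : Vtx.y i ∉ Cset n m ∪ Rinv (Rrel lit m) E :=
  notS_helper (by simp) (by simp) (by simp)

lemma notRinv_g {E : Set Edge} {i : ℕ} : Vtx.g i ∉ Rinv (Rrel lit m) E := by
  intro h; obtain ⟨_, _, hv⟩ := Rinv_sub_w h; exact absurd hv (by simp)

lemma notRinv_z {E : Set Edge} {i : ℕ} : Vtx.z i ∉ Rinv (Rrel lit m) E := by
  intro h; obtain ⟨_, _, hv⟩ := Rinv_sub_w h; exact absurd hv (by simp)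

lemma S_g {E : Set Edge} {i : ℕ} :
    Vtx.g i ∈ Cset n m ∪ Rinv (Rrel lit m) E ↔ i ≤ n - 1 := by
  constructor
  · rintro (hC | hR)
    · rcases hC with ⟨l, hl, hv⟩ | ⟨l, _, _, hv⟩
      · obtain rfl : i = l := by simpa using hv
        exact hl
      · simp at hv
    · exact absurd hR notRinv_g
  · exact fun h => Or.inl (mem_Cset_g h)

lemma S_z {E : Set Edge} {i : ℕ} :
    Vtx.z i ∈ Cset n m ∪ Rinv (Rrel lit m) E ↔ 1 ≤ i ∧ i ≤ m := by
  constructor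
  · rintro (hC | hR)
    · rcases hC with ⟨l, _, hv⟩ | ⟨l, h1, h2, hv⟩
      · simp at hv
      · obtain rfl : i = l := by simpa using hv
        exact ⟨h1, h2⟩
    · exact absurd hR notRinv_z
  · exact fun h => Or.inl (mem_Cset_z h.1 h.2)


/-! #### Canonical paths and deleted edge sets -/

def gtail (k : ℕ) : Bool → List Vtx
  | false => [Vtx.a (k+1), Vtx.b (k+1), Vtx.e (k+1), Vtx.d (k+1), Vtx.g (k+1)]
  | true  => [Vtx.a (k+1), Vtx.c (k+1), Vtx.f (k+1), Vtx.d (k+1), Vtx.g (k+1)]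

def gEdges (k : ℕ) : Bool → Set Edge
  | false => {(Vtx.g k, Vtx.a (k+1)), (Vtx.a (k+1), Vtx.b (k+1)), (Vtx.b (k+1), Vtx.e (k+1)),
      (Vtx.e (k+1), Vtx.d (k+1)), (Vtx.d (k+1), Vtx.g (k+1))}
  | true => {(Vtx.g k, Vtx.a (k+1)), (Vtx.a (k+1), Vtx.c (k+1)), (Vtx.c (k+1), Vtx.f (k+1)),
      (Vtx.f (k+1), Vtx.d (k+1)), (Vtx.d (k+1), Vtx.g (k+1))}

def Del (σ : ℕ → Bool) (k : ℕ) : Set Edge := {e | ∃ l < k, e ∈ gEdges l (σ (l+1))}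

def Ek (n m : ℕ) (σ : ℕ → Bool) (k : ℕ) : Set Edge := EG n m \ Del σ k

def xchain : ℕ → ℕ → List Vtx
  | t, 0 => [Vtx.x t]
  | t, c+1 => Vtx.x t :: xchain (t+1) c

def fullpath (k : ℕ) (b : Bool) (i : ℕ) : List Vtx :=
  Vtx.g k :: (gtail k b ++ xchain 1 (i-1) ++ [Vtx.y i, Vtx.z i])

def XDel (n i : ℕ) : Set Edge :=
  {e | e = (Vtx.g n, Vtx.x 1) ∨ (∃ t, 1 ≤ t ∧ t < i ∧ e = (Vtx.x t, Vtx.x (t+1))) ∨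
       e = (Vtx.x i, Vtx.y i) ∨ e = (Vtx.y i, Vtx.z i)}

def Efin (n m : ℕ) (σ : ℕ → Bool) (i : ℕ) : Set Edge := Ek n m σ n \ XDel n i

/-! #### `pathEdges` lemmas -/

lemma pathEdges_single (a : Vtx) : pathEdges [a] = ∅ := by
  simp [pathEdges]

lemma mem_pathEdges_cons₂ {a b : Vtx} {l : List Vtx} {e : Edge} :
    e ∈ pathEdges (a :: b :: l) ↔ e = (a, b) ∨ e ∈ pathEdges (b :: l) := by
  simp [pathEdges]

/-! #### Walks -/

inductive Walk (E : Set Edge) (S : Set Vtx) : Vtx → List Vtx → Prop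
  | single {u v : Vtx} : (u, v) ∈ E → v ∈ S → Walk E S u [v]
  | cons {u w : Vtx} {l : List Vtx} : (u, w) ∈ E → w ∉ S → Walk E S w l → Walk E S u (w :: l)

lemma walk_of_parts {E : Set Edge} {S : Set Vtx} (q : List Vtx) :
    ∀ u : Vtx, q ≠ [] →
      List.Chain' (fun a b => (a, b) ∈ E) (u :: q) →
      (∀ w ∈ q.dropLast, w ∉ S) →
      (∀ v, q.getLast? = some v → v ∈ S) → Walk E S u q := by
  induction q with
  | nil => simp
  | cons w q ih =>
    intro u _ hch hint hlast
    rcases List.isChain_cons_cons.mp hch with ⟨huw, hch'⟩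
    cases q with
    | nil => exact Walk.single huw (hlast w rfl)
    | cons v q' =>
      refine Walk.cons huw ?_ (ih w (by simp) hch' ?_ ?_)
      · exact hint w (by simp)
      · intro x hx; exact hint x (by simp [hx])
      · intro x hx; exact hlast x (by simpa using hx)

lemma walk_of_legal {C : Set Vtx} {R : Set (Vtx × Edge)} {u v : Vtx} {E E' : Set Edge}
    {p : List Vtx} (h : LegalMoveVia C R u E v E' p) :
    ∃ q, p = u :: q ∧ Walk E (C ∪ Rinv R E) u q ∧ q.getLast? = some v ∧
      E' = E \ pathEdges (u :: q) := by
  obtain ⟨hu, hv, hlen, hnd, hhead, hlast, hch, hint, hE'⟩ := h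
  cases p with
  | nil => simp at hhead
  | cons a q =>
    obtain rfl : u = a := ((by simpa using hhead : a = u)).symm
    have hq : q ≠ [] := by rintro rfl; simp at hlen
    refine ⟨q, rfl, walk_of_parts q u hq hch ?_ ?_, ?_, hE'⟩
    · intro w hw; exact hint w (by simpa using hw)
    · intro x hx
      cases q with
      | nil => simp at hx
      | cons b q' =>
        rw [List.getLast?_cons_cons] at hlast
        rw [hx] at hlast
        obtain rfl : x = v := by simpa using hlast
        exact hv
    · cases q with
      | nil => exact absurd rfl hq
      | cons b q' => rw [List.getLast?_cons_cons] at hlast; exact hlast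

lemma legal_of_parts {C : Set Vtx} {R : Set (Vtx × Edge)} {u v : Vtx} {E : Set Edge}
    {q : List Vtx} (hq : q ≠ []) (hu : u ∈ C)
    (hnd : (u :: q).Nodup)
    (hch : List.Chain' (fun a b => (a, b) ∈ E) (u :: q))
    (hint : ∀ w ∈ q.dropLast, w ∉ C ∪ Rinv R E)
    (hlast : q.getLast? = some v) (hvS : v ∈ C ∪ Rinv R E) :
    LegalMoveVia C R u E v (E \ pathEdges (u :: q)) (u :: q) := by
  refine ⟨hu, hvS, ?_, hnd, rfl, ?_, hch, ?_, rfl⟩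
  · cases q with
    | nil => exact absurd rfl hq
    | cons b q' => simp
  · cases q with
    | nil => exact absurd rfl hq
    | cons b q' => rw [List.getLast?_cons_cons]; exact hlast
  · intro w hw; exact hint w (by simpa using hw)


/-! #### `Del` membership lemmas -/

lemma Del_ga {σ : ℕ → Bool} {k l : ℕ} : (Vtx.g l, Vtx.a (l+1)) ∈ Del σ k ↔ l < k := by
  constructor
  · rintro ⟨l', hl', hmem⟩
    cases hσ : σ (l'+1) <;> rw [hσ] at hmem <;>
      simp only [gEdges, Set.mem_insert_iff, Set.mem_singleton_iff, Prod.mk.injEq] at hmem <;>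
      simp_all <;> omega
  · intro h
    refine ⟨l, h, ?_⟩
    cases σ (l+1) <;> simp [gEdges]

lemma Del_be {σ : ℕ → Bool} {k l : ℕ} :
    (Vtx.b l, Vtx.e l) ∈ Del σ k ↔ 1 ≤ l ∧ l ≤ k ∧ σ l = false := by
  constructor
  · rintro ⟨l', hl', hmem⟩
    cases hσ : σ (l'+1) <;> rw [hσ] at hmem <;>
      simp only [gEdges, Set.mem_insert_iff, Set.mem_singleton_iff, Prod.mk.injEq] at hmem <;>
      simp_all <;> omega
  · rintro ⟨h1, h2, h3⟩
    refine ⟨l - 1, by omega, ?_⟩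
    have : l - 1 + 1 = l := by omega
    rw [this, h3]
    simp [gEdges]
    omega

lemma Del_cf {σ : ℕ → Bool} {k l : ℕ} :
    (Vtx.c l, Vtx.f l) ∈ Del σ k ↔ 1 ≤ l ∧ l ≤ k ∧ σ l = true := by
  constructor
  · rintro ⟨l', hl', hmem⟩
    cases hσ : σ (l'+1) <;> rw [hσ] at hmem <;>
      simp only [gEdges, Set.mem_insert_iff, Set.mem_singleton_iff, Prod.mk.injEq] at hmem <;>
      simp_all <;> omega
  · rintro ⟨h1, h2, h3⟩
    refine ⟨l - 1, by omega, ?_⟩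
    have : l - 1 + 1 = l := by omega
    rw [this, h3]
    simp [gEdges]
    omega

lemma Del_dg {σ : ℕ → Bool} {k l : ℕ} :
    (Vtx.d l, Vtx.g l) ∈ Del σ k ↔ 1 ≤ l ∧ l ≤ k := by
  constructor
  · rintro ⟨l', hl', hmem⟩
    cases hσ : σ (l'+1) <;> rw [hσ] at hmem <;>
      simp only [gEdges, Set.mem_insert_iff, Set.mem_singleton_iff, Prod.mk.injEq] at hmem <;>
      simp_all <;> omega
  · rintro ⟨h1, h2⟩
    refine ⟨l - 1, by omega, ?_⟩
    have : l - 1 + 1 = l := by omega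
    rw [this]
    cases σ l <;> simp [gEdges] <;> omega

lemma Del_ax {σ : ℕ → Bool} {k l : ℕ} {v : Vtx} :
    (Vtx.a l, v) ∈ Del σ k → l ≤ k := by
  rintro ⟨l', hl', hmem⟩
  cases hσ : σ (l'+1) <;> rw [hσ] at hmem <;>
    simp only [gEdges, Set.mem_insert_iff, Set.mem_singleton_iff, Prod.mk.injEq] at hmem <;>
    simp_all <;> omega

lemma Del_bx {σ : ℕ → Bool} {k l : ℕ} {v : Vtx} :
    (Vtx.b l, v) ∈ Del σ k → l ≤ k := by
  rintro ⟨l', hl', hmem⟩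
  cases hσ : σ (l'+1) <;> rw [hσ] at hmem <;>
    simp only [gEdges, Set.mem_insert_iff, Set.mem_singleton_iff, Prod.mk.injEq] at hmem <;>
    simp_all <;> omega

lemma Del_cx {σ : ℕ → Bool} {k l : ℕ} {v : Vtx} :
    (Vtx.c l, v) ∈ Del σ k → l ≤ k := by
  rintro ⟨l', hl', hmem⟩
  cases hσ : σ (l'+1) <;> rw [hσ] at hmem <;>
    simp only [gEdges, Set.mem_insert_iff, Set.mem_singleton_iff, Prod.mk.injEq] at hmem <;>
    simp_all <;> omega

lemma Del_ex {σ : ℕ → Bool} {k l : ℕ} {v : Vtx} :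
    (Vtx.e l, v) ∈ Del σ k → l ≤ k := by
  rintro ⟨l', hl', hmem⟩
  cases hσ : σ (l'+1) <;> rw [hσ] at hmem <;>
    simp only [gEdges, Set.mem_insert_iff, Set.mem_singleton_iff, Prod.mk.injEq] at hmem <;>
    simp_all <;> omega

lemma Del_fx {σ : ℕ → Bool} {k l : ℕ} {v : Vtx} :
    (Vtx.f l, v) ∈ Del σ k → l ≤ k := by
  rintro ⟨l', hl', hmem⟩
  cases hσ : σ (l'+1) <;> rw [hσ] at hmem <;>
    simp only [gEdges, Set.mem_insert_iff, Set.mem_singleton_iff, Prod.mk.injEq] at hmem <;>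
    simp_all <;> omega

lemma Del_dx {σ : ℕ → Bool} {k l : ℕ} {v : Vtx} :
    (Vtx.d l, v) ∈ Del σ k → l ≤ k := by
  rintro ⟨l', hl', hmem⟩
  cases hσ : σ (l'+1) <;> rw [hσ] at hmem <;>
    simp only [gEdges, Set.mem_insert_iff, Set.mem_singleton_iff, Prod.mk.injEq] at hmem <;>
    simp_all <;> omega

lemma notDel_gx {σ : ℕ → Bool} {k l : ℕ} : (Vtx.g l, Vtx.x 1) ∉ Del σ k := by
  rintro ⟨l', hl', hmem⟩
  cases hσ : σ (l'+1) <;> rw [hσ] at hmem <;>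
    simp [gEdges, Prod.ext_iff] at hmem

lemma notDel_xv {σ : ℕ → Bool} {k i : ℕ} {v : Vtx} : (Vtx.x i, v) ∉ Del σ k := by
  rintro ⟨l', hl', hmem⟩
  cases hσ : σ (l'+1) <;> rw [hσ] at hmem <;>
    simp [gEdges, Prod.ext_iff] at hmem

lemma notDel_yv {σ : ℕ → Bool} {k i : ℕ} {v : Vtx} : (Vtx.y i, v) ∉ Del σ k := by
  rintro ⟨l', hl', hmem⟩
  cases hσ : σ (l'+1) <;> rw [hσ] at hmem <;>
    simp [gEdges, Prod.ext_iff] at hmem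

lemma notDel_zv {σ : ℕ → Bool} {k i : ℕ} {v : Vtx} : (Vtx.z i, v) ∉ Del σ k := by
  rintro ⟨l', hl', hmem⟩
  cases hσ : σ (l'+1) <;> rw [hσ] at hmem <;>
    simp [gEdges, Prod.ext_iff] at hmem

lemma notDel_wv {σ : ℕ → Bool} {k i j : ℕ} {v : Vtx} : (Vtx.w i j, v) ∉ Del σ k := by
  rintro ⟨l', hl', hmem⟩
  cases hσ : σ (l'+1) <;> rw [hσ] at hmem <;>
    simp [gEdges, Prod.ext_iff] at hmem

lemma Del_succ (σ : ℕ → Bool) (k : ℕ) (b : Bool) :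
    Del (Function.update σ (k+1) b) (k+1) = Del σ k ∪ gEdges k b := by
  ext e
  simp only [Del, Set.mem_setOf_eq, Set.mem_union]
  constructor
  · rintro ⟨l, hl, hmem⟩
    rcases Nat.lt_succ_iff_lt_or_eq.mp hl with h | rfl
    · exact Or.inl ⟨l, h, by rwa [Function.update_of_ne (by omega)] at hmem⟩
    · exact Or.inr (by rwa [Function.update_self] at hmem)
  · rintro (⟨l, hl, hmem⟩ | hmem)
    · exact ⟨l, by omega, by rwa [Function.update_of_ne (by omega)]⟩
    · exact ⟨k, by omega, by rwa [Function.update_self]⟩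

lemma Ek_succ (σ : ℕ → Bool) (k : ℕ) (b : Bool) :
    Ek n m (Function.update σ (k+1) b) (k+1) = Ek n m σ k \ gEdges k b := by
  unfold Ek
  rw [Del_succ, ← Set.diff_diff]

/-! #### `xchain` lemmas -/

lemma xchain_eq_cons (t c : ℕ) : ∃ tl, xchain t c = Vtx.x t :: tl := by
  cases c <;> exact ⟨_, rfl⟩

lemma mem_xchain {v : Vtx} {t c : ℕ} (h : v ∈ xchain t c) :
    ∃ j, t ≤ j ∧ j ≤ t + c ∧ v = Vtx.x j := by
  induction c generalizing t with
  | zero => simp [xchain] at h; exact ⟨t, le_rfl, by omega, h⟩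
  | succ c ih =>
    rcases (by simpa [xchain] using h : v = Vtx.x t ∨ v ∈ xchain (t+1) c) with rfl | h'
    · exact ⟨t, le_rfl, by omega, rfl⟩
    · obtain ⟨j, h1, h2, rfl⟩ := ih h'
      exact ⟨j, by omega, by omega, rfl⟩

lemma xchain_nodup (c t : ℕ) : (xchain t c).Nodup := by
  induction c generalizing t with
  | zero => simp [xchain]
  | succ c ih =>
    simp only [xchain, List.nodup_cons]
    refine ⟨fun h => ?_, ih (t+1)⟩
    obtain ⟨j, h1, _, hj⟩ := mem_xchain h
    have : t = j := by simpa using hj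
    omega

lemma mem_pathEdges_xchain {e : Edge} {rest : List Vtx} : ∀ c t,
    (e ∈ pathEdges (xchain t c ++ rest) ↔
      (∃ j, t ≤ j ∧ j < t + c ∧ e = (Vtx.x j, Vtx.x (j+1))) ∨
      e ∈ pathEdges (Vtx.x (t+c) :: rest)) := by
  intro c
  induction c with
  | zero =>
    intro t
    simp only [xchain]
    constructor
    · intro h; exact Or.inr h
    · rintro (⟨j, h1, h2, rfl⟩ | h)
      · omega
      · exact h
  | succ c ih =>
    intro t
    obtain ⟨tl, htl⟩ := xchain_eq_cons (t+1) c
    have hx : xchain t (c+1) ++ rest = Vtx.x t :: (Vtx.x (t+1) :: (tl ++ rest)) := by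
      simp [xchain, htl]
    rw [hx, mem_pathEdges_cons₂]
    have : Vtx.x (t+1) :: (tl ++ rest) = xchain (t+1) c ++ rest := by simp [htl]
    rw [this, ih (t+1)]
    constructor
    · rintro (rfl | ⟨j, h1, h2, rfl⟩ | h)
      · exact Or.inl ⟨t, le_rfl, by omega, rfl⟩
      · exact Or.inl ⟨j, by omega, by omega, rfl⟩
      · refine Or.inr ?_
        have ht : t + 1 + c = t + (c+1) := by omega
        rwa [ht] at h
    · rintro (⟨j, h1, h2, rfl⟩ | h)
      · by_cases hj : j = t
        · subst hj; exact Or.inl rfl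
        · exact Or.inr (Or.inl ⟨j, by omega, by omega, rfl⟩)
      · refine Or.inr (Or.inr ?_)
        have ht : t + 1 + c = t + (c+1) := by omega
        rwa [ht]

lemma chain'_xchain_append {E : Set Edge} {rest : List Vtx} : ∀ c t,
    (∀ j, t ≤ j → j < t + c → (Vtx.x j, Vtx.x (j+1)) ∈ E) →
    List.Chain' (fun a b => (a, b) ∈ E) (Vtx.x (t+c) :: rest) →
    List.Chain' (fun a b => (a, b) ∈ E) (xchain t c ++ rest) := by
  intro c
  induction c with
  | zero => intro t _ h; simpa [xchain] using h
  | succ c ih =>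
    intro t hE hrest
    obtain ⟨tl, htl⟩ := xchain_eq_cons (t+1) c
    have hx : xchain t (c+1) ++ rest = Vtx.x t :: (xchain (t+1) c ++ rest) := by
      simp [xchain]
    rw [hx]; unfold List.Chain'; rw [List.isChain_cons]
    constructor
    · intro h hh
      have hh' : (xchain (t+1) c ++ rest).head? = some (Vtx.x (t+1)) := by
        rw [htl]; simp
      rw [hh'] at hh
      obtain rfl : Vtx.x (t+1) = h := by simpa using hh
      exact hE t le_rfl (by omega)
    · refine ih (t+1) (fun j h1 h2 => hE j (by omega) (by omega)) ?_
      have ht : t + 1 + c = t + (c+1) := by omega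
      rwa [ht]


/-! #### More `S` lemmas -/

lemma S_w {E : Set Edge} {i j : ℕ} :
    Vtx.w i j ∈ Cset n m ∪ Rinv (Rrel lit m) E ↔ Vtx.w i j ∈ Rinv (Rrel lit m) E := by
  constructor
  · rintro (hC | hR)
    · exfalso; rcases hC with ⟨l, _, hv⟩ | ⟨l, _, _, hv⟩ <;> simp at hv
    · exact hR
  · exact Or.inr

lemma xchain_succ (t c : ℕ) : xchain t (c+1) = Vtx.x t :: xchain (t+1) c := rfl

/-! #### Walk classification -/

lemma walk_x {E : Set Edge} (hE : E ⊆ EG n m) {u : Vtx} {q : List Vtx}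
    (hw : Walk E (Cset n m ∪ Rinv (Rrel lit m) E) u q) :
    ∀ t, u = Vtx.x t →
      ∃ i, t ≤ i ∧ 1 ≤ i ∧ i ≤ m ∧ Vtx.x t :: q = xchain t (i - t) ++ [Vtx.y i, Vtx.z i] := by
  induction hw with
  | single he hS =>
    intro t ht; subst ht
    rcases succ_x (hE he) with ⟨_, _, rfl⟩ | ⟨_, _, rfl⟩
    · exact absurd hS notS_y
    · exact absurd hS notS_x
  | cons he hnS hw' ih =>
    intro t ht; subst ht
    rcases succ_x (hE he) with ⟨ht1, ht2, rfl⟩ | ⟨ht1, ht2, rfl⟩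
    · -- next is y t
      cases hw' with
      | single he2 hS2 =>
        obtain ⟨_, _, rfl⟩ := succ_y (hE he2)
        refine ⟨t, le_rfl, ht1, ht2, ?_⟩
        simp [xchain]
      | cons he2 hnS2 hw2 =>
        obtain ⟨h1, h2, rfl⟩ := succ_y (hE he2)
        exact absurd (S_z.mpr ⟨h1, h2⟩) hnS2
    · -- next is x (t+1)
      obtain ⟨i, hi1, hi2, hi3, hq⟩ := ih (t+1) rfl
      refine ⟨i, by omega, hi2, hi3, ?_⟩
      have hit : i - t = (i - (t+1)) + 1 := by omega
      rw [hit, xchain_succ, List.cons_append, ← hq]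

lemma walk_from_z {E : Set Edge} {q : List Vtx} {t : ℕ} (hE : E ⊆ EG n m)
    (hw : Walk E (Cset n m ∪ Rinv (Rrel lit m) E) (Vtx.z t) q) :
    ∃ j, 1 ≤ j ∧ j ≤ 3 ∧ Vtx.w t j ∈ Rinv (Rrel lit m) E := by
  cases hw with
  | single he hS =>
    obtain ⟨h1, h2, rfl⟩ := succ_z (hE he)
    exact ⟨1, by omega, by omega, S_w.mp hS⟩
  | cons he hnS hw1 =>
    obtain ⟨h1, h2, rfl⟩ := succ_z (hE he)
    cases hw1 with
    | single he2 hS2 =>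
      obtain ⟨_, _, h⟩ := succ_w (hE he2)
      rcases h with ⟨_, rfl⟩ | ⟨h, _⟩
      · exact ⟨2, by omega, by omega, S_w.mp hS2⟩
      · omega
    | cons he2 hnS2 hw2 =>
      obtain ⟨_, _, h⟩ := succ_w (hE he2)
      rcases h with ⟨_, rfl⟩ | ⟨h, _⟩
      swap
      · omega
      cases hw2 with
      | single he3 hS3 =>
        obtain ⟨_, _, h3⟩ := succ_w (hE he3)
        rcases h3 with ⟨h3, rfl⟩ | ⟨h3, rfl⟩
        · omega
        · exact ⟨3, by omega, by omega, S_w.mp hS3⟩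
      | cons he3 hnS3 hw3 =>
        obtain ⟨_, _, h3⟩ := succ_w (hE he3)
        rcases h3 with ⟨h3, rfl⟩ | ⟨h3, rfl⟩
        · omega
        cases hw3 with
        | single he4 _ =>
          obtain ⟨_, _, h4⟩ := succ_w (hE he4)
          rcases h4 with ⟨h4, _⟩ | ⟨h4, _⟩ <;> omega
        | cons he4 _ _ =>
          obtain ⟨_, _, h4⟩ := succ_w (hE he4)
          rcases h4 with ⟨h4, _⟩ | ⟨h4, _⟩ <;> omega

lemma walk_from_g {E : Set Edge} {q : List Vtx} {k : ℕ} (hE : E ⊆ EG n m)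
    (hn2 : 2 ≤ n) (hk : k ≤ n - 1)
    (hw : Walk E (Cset n m ∪ Rinv (Rrel lit m) E) (Vtx.g k) q) :
    ∃ b : Bool, (k + 1 ≤ n - 1 ∧ q = gtail k b) ∨
      (k + 1 = n ∧ ∃ i, 1 ≤ i ∧ i ≤ m ∧ Vtx.g k :: q = fullpath k b i) := by
  have hkn : k ≠ n := by omega
  cases hw with
  | single he hS =>
    rcases succ_g (hE he) with ⟨h1, rfl⟩ | ⟨h1, rfl⟩
    · exact absurd hS notS_a
    · exact absurd h1 hkn
  | cons he hnS hw1 =>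
    rcases succ_g (hE he) with ⟨h1, rfl⟩ | ⟨h1, rfl⟩
    swap
    · exact absurd h1 hkn
    cases hw1 with
    | single he2 hS2 =>
      rcases succ_a (hE he2) with ⟨_, _, rfl | rfl⟩
      · exact absurd hS2 notS_b
      · exact absurd hS2 notS_c
    | cons he2 hnS2 hw2 =>
      rcases succ_a (hE he2) with ⟨ha1, ha2, rfl | rfl⟩
      · -- b side
        cases hw2 with
        | single he3 hS3 => obtain ⟨_, _, rfl⟩ := succ_b (hE he3); exact absurd hS3 notS_e
        | cons he3 hnS3 hw3 =>
          obtain ⟨_, _, rfl⟩ := succ_b (hE he3)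
          cases hw3 with
          | single he4 hS4 => obtain ⟨_, _, rfl⟩ := succ_e (hE he4); exact absurd hS4 notS_d
          | cons he4 hnS4 hw4 =>
            obtain ⟨_, _, rfl⟩ := succ_e (hE he4)
            cases hw4 with
            | single he5 hS5 =>
              obtain ⟨_, _, rfl⟩ := succ_d (hE he5)
              exact ⟨false, Or.inl ⟨S_g.mp hS5, rfl⟩⟩
            | cons he5 hnS5 hw5 =>
              obtain ⟨_, _, rfl⟩ := succ_d (hE he5)
              have hk1 : ¬ (k + 1 ≤ n - 1) := fun h => hnS5 (S_g.mpr h)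
              have hkn1 : k + 1 = n := by omega
              cases hw5 with
              | single he6 hS6 =>
                rcases succ_g (hE he6) with ⟨h6, rfl⟩ | ⟨h6, rfl⟩
                · omega
                · exact absurd hS6 notS_x
              | cons he6 hnS6 hw6 =>
                rcases succ_g (hE he6) with ⟨h6, rfl⟩ | ⟨h6, rfl⟩
                · omega
                · obtain ⟨i, hi1, hi2, hi3, hq⟩ := walk_x hE hw6 1 rfl
                  refine ⟨false, Or.inr ⟨hkn1, i, hi2, hi3, ?_⟩⟩
                  simp only [fullpath, gtail, List.cons_append, List.append_assoc,
                    List.nil_append, List.cons.injEq, true_and]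
                  rw [← hq]
      · -- c side
        cases hw2 with
        | single he3 hS3 => obtain ⟨_, _, rfl⟩ := succ_c (hE he3); exact absurd hS3 notS_f
        | cons he3 hnS3 hw3 =>
          obtain ⟨_, _, rfl⟩ := succ_c (hE he3)
          cases hw3 with
          | single he4 hS4 => obtain ⟨_, _, rfl⟩ := succ_f (hE he4); exact absurd hS4 notS_d
          | cons he4 hnS4 hw4 =>
            obtain ⟨_, _, rfl⟩ := succ_f (hE he4)
            cases hw4 with
            | single he5 hS5 =>
              obtain ⟨_, _, rfl⟩ := succ_d (hE he5)
              exact ⟨true, Or.inl ⟨S_g.mp hS5, rfl⟩⟩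
            | cons he5 hnS5 hw5 =>
              obtain ⟨_, _, rfl⟩ := succ_d (hE he5)
              have hk1 : ¬ (k + 1 ≤ n - 1) := fun h => hnS5 (S_g.mpr h)
              have hkn1 : k + 1 = n := by omega
              cases hw5 with
              | single he6 hS6 =>
                rcases succ_g (hE he6) with ⟨h6, rfl⟩ | ⟨h6, rfl⟩
                · omega
                · exact absurd hS6 notS_x
              | cons he6 hnS6 hw6 =>
                rcases succ_g (hE he6) with ⟨h6, rfl⟩ | ⟨h6, rfl⟩
                · omega
                · obtain ⟨i, hi1, hi2, hi3, hq⟩ := walk_x hE hw6 1 rfl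
                  refine ⟨true, Or.inr ⟨hkn1, i, hi2, hi3, ?_⟩⟩
                  simp only [fullpath, gtail, List.cons_append, List.append_assoc,
                    List.nil_append, List.cons.injEq, true_and]
                  rw [← hq]

/-! #### Aliveness of `w`-vertices -/

lemma mem_Rinv_w {E : Set Edge} {i j : ℕ} (hi1 : 1 ≤ i) (hi2 : i ≤ m)
    (hj1 : 1 ≤ j) (hj2 : j ≤ 3) :
    Vtx.w i j ∈ Rinv (Rrel lit m) E ↔
      ((∃ l, lit i j = Lit.pos l ∧ (Vtx.b l, Vtx.e l) ∈ E) ∨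
       (∃ l, lit i j = Lit.neg l ∧ (Vtx.c l, Vtx.f l) ∈ E)) := by
  constructor
  · rintro ⟨e, heE, hR⟩
    obtain ⟨i', j', _, _, _, _, h | h⟩ := hR
    · obtain ⟨l, hl, hp⟩ := h
      simp only [Prod.mk.injEq] at hp
      obtain ⟨hww, rfl⟩ := hp
      obtain ⟨rfl, rfl⟩ : i = i' ∧ j = j' := by simpa using hww
      exact Or.inl ⟨l, hl, heE⟩
    · obtain ⟨l, hl, hp⟩ := h
      simp only [Prod.mk.injEq] at hp
      obtain ⟨hww, rfl⟩ := hp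
      obtain ⟨rfl, rfl⟩ : i = i' ∧ j = j' := by simpa using hww
      exact Or.inr ⟨l, hl, heE⟩
  · rintro (⟨l, hl, hbe⟩ | ⟨l, hl, hcf⟩)
    · exact ⟨(Vtx.b l, Vtx.e l), hbe, ⟨i, j, hi1, hi2, hj1, hj2, Or.inl ⟨l, hl, rfl⟩⟩⟩
    · exact ⟨(Vtx.c l, Vtx.f l), hcf, ⟨i, j, hi1, hi2, hj1, hj2, Or.inr ⟨l, hl, rfl⟩⟩⟩

lemma be_mem_Efin {σ : ℕ → Bool} {i0 l : ℕ} (h1 : 1 ≤ l) (h2 : l ≤ n) :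
    ((Vtx.b l, Vtx.e l) ∈ Efin n m σ i0) ↔ σ l = true := by
  simp only [Efin, Ek, Set.mem_diff]
  constructor
  · rintro ⟨⟨hEG, hDel⟩, hX⟩
    by_contra hσ
    exact hDel (Del_be.mpr ⟨h1, by omega, by simpa using hσ⟩)
  · intro hσ
    refine ⟨⟨mem_EG_be h1 h2, fun hd => ?_⟩, fun hX => ?_⟩
    · obtain ⟨_, _, hf⟩ := Del_be.mp hd
      simp [hσ] at hf
    · rcases hX with h | ⟨t, _, _, h⟩ | h | h <;> simp [Prod.ext_iff] at h

lemma cf_mem_Efin {σ : ℕ → Bool} {i0 l : ℕ} (h1 : 1 ≤ l) (h2 : l ≤ n) :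
    ((Vtx.c l, Vtx.f l) ∈ Efin n m σ i0) ↔ σ l = false := by
  simp only [Efin, Ek, Set.mem_diff]
  constructor
  · rintro ⟨⟨hEG, hDel⟩, hX⟩
    by_contra hσ
    exact hDel (Del_cf.mpr ⟨h1, by omega, by simpa using hσ⟩)
  · intro hσ
    refine ⟨⟨mem_EG_cf h1 h2, fun hd => ?_⟩, fun hX => ?_⟩
    · obtain ⟨_, _, hf⟩ := Del_cf.mp hd
      simp [hσ] at hf
    · rcases hX with h | ⟨t, _, _, h⟩ | h | h <;> simp [Prod.ext_iff] at h

lemma w_alive_iff {σ : ℕ → Bool} {i0 i j : ℕ} (hwf : LitWF n m lit)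
    (hi1 : 1 ≤ i) (hi2 : i ≤ m) (hj1 : 1 ≤ j) (hj2 : j ≤ 3) :
    Vtx.w i j ∈ Rinv (Rrel lit m) (Efin n m σ i0) ↔ (lit i j).eval σ = true := by
  rw [mem_Rinv_w hi1 hi2 hj1 hj2]
  obtain ⟨hv1, hv2⟩ := hwf i j hi1 hi2 hj1 hj2
  cases hlit : lit i j with
  | pos l =>
    rw [hlit] at hv1 hv2
    simp only [Lit.var] at hv1 hv2
    simp only [Lit.eval]
    constructor
    · rintro (⟨l', hl', hbe⟩ | ⟨l', hl', _⟩)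
      · obtain rfl : l = l' := by simpa using hl'
        exact (be_mem_Efin hv1 hv2).mp hbe
      · simp at hl'
    · intro hσ
      exact Or.inl ⟨l, rfl, (be_mem_Efin hv1 hv2).mpr hσ⟩
  | neg l =>
    rw [hlit] at hv1 hv2
    simp only [Lit.var] at hv1 hv2
    simp only [Lit.eval]
    constructor
    · rintro (⟨l', hl', _⟩ | ⟨l', hl', hcf⟩)
      · simp at hl'
      · obtain rfl : l = l' := by simpa using hl'
        simp [(cf_mem_Efin hv1 hv2).mp hcf]
    · intro hσ
      refine Or.inr ⟨l, rfl, (cf_mem_Efin hv1 hv2).mpr ?_⟩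
      simpa using hσ


/-! #### Canonical move legality -/

lemma notmem_xchain {v : Vtx} (h : ∀ j, v ≠ Vtx.x j) {t c : ℕ} : v ∉ xchain t c := by
  intro hm
  obtain ⟨j, _, _, hj⟩ := mem_xchain hm
  exact h j hj

lemma pathEdges_gtail (k : ℕ) (b : Bool) :
    pathEdges (Vtx.g k :: gtail k b) = gEdges k b := by
  cases b <;> ext e <;>
    simp [gtail, gEdges, pathEdges] <;> tauto

lemma notXDel_z {n' i0 i : ℕ} {v : Vtx} : (Vtx.z i, v) ∉ XDel n' i0 := by
  rintro (h | ⟨t, _, _, h⟩ | h | h) <;> simp [Prod.ext_iff] at h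

lemma notXDel_w {n' i0 i j : ℕ} {v : Vtx} : (Vtx.w i j, v) ∉ XDel n' i0 := by
  rintro (h | ⟨t, _, _, h⟩ | h | h) <;> simp [Prod.ext_iff] at h

lemma mem_pathEdges_fullpath {e : Edge} {k i : ℕ} {b : Bool} (hi : 1 ≤ i) :
    e ∈ pathEdges (fullpath k b i) ↔ (e ∈ gEdges k b ∨ e ∈ XDel (k+1) i) := by
  have h1i : 1 + (i-1) = i := by omega
  obtain ⟨tl, htl⟩ := xchain_eq_cons 1 (i-1)
  have hshape : fullpath k b i =
      Vtx.g k :: (gtail k b ++ (xchain 1 (i-1) ++ [Vtx.y i, Vtx.z i])) := by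
    simp [fullpath]
  rw [hshape]
  cases b <;>
  · simp only [gtail, List.cons_append, List.nil_append]
    rw [mem_pathEdges_cons₂, mem_pathEdges_cons₂, mem_pathEdges_cons₂,
      mem_pathEdges_cons₂, mem_pathEdges_cons₂, htl, List.cons_append,
      mem_pathEdges_cons₂, ← List.cons_append, ← htl, mem_pathEdges_xchain (i-1) 1,
      h1i, mem_pathEdges_cons₂, mem_pathEdges_cons₂, pathEdges_single]
    simp only [gEdges, XDel, Set.mem_insert_iff, Set.mem_singleton_iff,
      Set.mem_setOf_eq, Set.mem_empty_iff_false, or_false]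
    constructor
    · rintro (rfl | rfl | rfl | rfl | rfl | rfl | ⟨j, hj1, hj2, rfl⟩ | rfl | rfl) <;>
        first
          | tauto
          | exact Or.inr (Or.inr (Or.inl ⟨j, hj1, hj2, rfl⟩))
    · rintro ((rfl | rfl | rfl | rfl | rfl) | (rfl | ⟨t, ht1, ht2, rfl⟩ | rfl | rfl)) <;>
        first
          | tauto
          | exact Or.inr (Or.inr (Or.inr (Or.inr (Or.inr (Or.inr
              (Or.inl ⟨t, ht1, ht2, rfl⟩))))))
          | exact Or.inr (Or.inr (Or.inr (Or.inr (Or.inr (Or.inl ⟨t, ht1, ht2, rfl⟩)))))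
          | exact Or.inr (Or.inr (Or.inr (Or.inr (Or.inl ⟨t, ht1, ht2, rfl⟩))))

lemma fullpath_nodup {k i : ℕ} {b : Bool} (hi : 1 ≤ i) : (fullpath k b i).Nodup := by
  have hx := xchain_nodup (i-1) 1
  have hyz : (xchain 1 (i-1) ++ [Vtx.y i, Vtx.z i]).Nodup := by
    rw [List.nodup_append]
    refine ⟨hx, by simp, ?_⟩
    intro v hv
    obtain ⟨j, _, _, rfl⟩ := mem_xchain hv
    simp
  have hshape : fullpath k b i =
      (Vtx.g k :: gtail k b) ++ (xchain 1 (i-1) ++ [Vtx.y i, Vtx.z i]) := by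
    simp [fullpath]
  rw [hshape, List.nodup_append]
  refine ⟨?_, hyz, ?_⟩
  · cases b <;> simp [gtail] <;> omega
  · intro v hv
    have key : v ∉ xchain 1 (i-1) ∧ v ≠ Vtx.y i ∧ v ≠ Vtx.z i →
        v ∉ xchain 1 (i-1) ++ [Vtx.y i, Vtx.z i] := by
      rintro ⟨h1', h2', h3'⟩ hmem
      rcases List.mem_append.mp hmem with h | h
      · exact h1' h
      · simp only [List.mem_cons, List.mem_singleton, List.not_mem_nil, or_false] at h
        rcases h with rfl | rfl
        · exact h2' rfl
        · exact h3' rfl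
    rintro c hc rfl
    refine key ?_ hc
    cases b <;> simp only [gtail, List.mem_cons, List.not_mem_nil, or_false] at hv <;>
      rcases hv with rfl | rfl | rfl | rfl | rfl | rfl <;>
      exact ⟨notmem_xchain (fun j => by simp), by simp, by simp⟩

lemma fullpath_chain' {σ : ℕ → Bool} {k i : ℕ} {b : Bool} (hn2 : 2 ≤ n)
    (hkn : k + 1 = n) (hi1 : 1 ≤ i) (hi2 : i ≤ m) :
    List.Chain' (fun a b' => (a, b') ∈ Ek n m σ k) (fullpath k b i) := by
  have h1i : 1 + (i-1) = i := by omega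
  have hk1n : 1 ≤ k + 1 := by omega
  have hk2n : k + 1 ≤ n := by omega
  have hkn1 : k ≤ n - 1 := by omega
  have htail : List.Chain' (fun a b' => (a, b') ∈ Ek n m σ k)
      (Vtx.g (k+1) :: (xchain 1 (i-1) ++ [Vtx.y i, Vtx.z i])) := by
    obtain ⟨tl, htl⟩ := xchain_eq_cons 1 (i-1)
    unfold List.Chain'; rw [List.isChain_cons]
    constructor
    · intro h hh
      rw [htl] at hh
      simp only [List.cons_append, List.head?_cons] at hh
      obtain rfl : Vtx.x 1 = h := by simpa using hh
      refine ⟨?_, notDel_gx⟩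
      rw [hkn]; exact mem_EG_gx
    · refine chain'_xchain_append (i-1) 1 (fun j hj1 hj2 => ?_) ?_
      · exact ⟨mem_EG_xx hj1 (by omega), notDel_xv⟩
      · rw [h1i]; unfold List.Chain'; rw [List.isChain_cons_cons, List.isChain_cons_cons]
        exact ⟨⟨mem_EG_xy hi1 hi2, notDel_xv⟩, ⟨mem_EG_yz hi1 hi2, notDel_yv⟩,
          List.isChain_singleton _⟩
  have hshape : fullpath k b i =
      Vtx.g k :: (gtail k b ++ (xchain 1 (i-1) ++ [Vtx.y i, Vtx.z i])) := by
    simp [fullpath]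
  rw [hshape]
  cases b
  · simp only [gtail, List.cons_append, List.nil_append, List.Chain', List.isChain_cons_cons]
    refine ⟨⟨mem_EG_ga hkn1, fun h => by simpa using Del_ga.mp h⟩,
      ⟨mem_EG_ab hk1n hk2n, fun h => by have := Del_ax h; omega⟩,
      ⟨mem_EG_be hk1n hk2n, fun h => by have := Del_bx h; omega⟩,
      ⟨mem_EG_ed hk1n hk2n, fun h => by have := Del_ex h; omega⟩,
      ⟨mem_EG_dg hk1n hk2n, fun h => by have := Del_dx h; omega⟩, htail⟩
  · simp only [gtail, List.cons_append, List.nil_append, List.Chain', List.isChain_cons_cons]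
    refine ⟨⟨mem_EG_ga hkn1, fun h => by simpa using Del_ga.mp h⟩,
      ⟨mem_EG_ac hk1n hk2n, fun h => by have := Del_ax h; omega⟩,
      ⟨mem_EG_cf hk1n hk2n, fun h => by have := Del_cx h; omega⟩,
      ⟨mem_EG_fd hk1n hk2n, fun h => by have := Del_fx h; omega⟩,
      ⟨mem_EG_dg hk1n hk2n, fun h => by have := Del_dx h; omega⟩, htail⟩

lemma legal_gmove {σ : ℕ → Bool} {k : ℕ} (hk : k + 1 ≤ n - 1) (hn2 : 2 ≤ n) (b : Bool) :
    LegalMoveVia (Cset n m) (Rrel lit m) (Vtx.g k) (Ek n m σ k) (Vtx.g (k+1))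
      (Ek n m σ k \ pathEdges (Vtx.g k :: gtail k b)) (Vtx.g k :: gtail k b) := by
  have hk1n : 1 ≤ k + 1 := by omega
  have hk2n : k + 1 ≤ n := by omega
  have hkn1 : k ≤ n - 1 := by omega
  refine legal_of_parts ?_ (mem_Cset_g hkn1) ?_ ?_ ?_ ?_ (Or.inl (mem_Cset_g hk))
  · cases b <;> simp [gtail]
  · cases b <;> simp [gtail] <;> omega
  · cases b
    · simp only [gtail, List.Chain', List.isChain_cons_cons]
      exact ⟨⟨mem_EG_ga hkn1, fun h => by simpa using Del_ga.mp h⟩,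
        ⟨mem_EG_ab hk1n hk2n, fun h => by have := Del_ax h; omega⟩,
        ⟨mem_EG_be hk1n hk2n, fun h => by have := Del_bx h; omega⟩,
        ⟨mem_EG_ed hk1n hk2n, fun h => by have := Del_ex h; omega⟩,
        ⟨mem_EG_dg hk1n hk2n, fun h => by have := Del_dx h; omega⟩,
        List.isChain_singleton _⟩
    · simp only [gtail, List.Chain', List.isChain_cons_cons]
      exact ⟨⟨mem_EG_ga hkn1, fun h => by simpa using Del_ga.mp h⟩,
        ⟨mem_EG_ac hk1n hk2n, fun h => by have := Del_ax h; omega⟩,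
        ⟨mem_EG_cf hk1n hk2n, fun h => by have := Del_cx h; omega⟩,
        ⟨mem_EG_fd hk1n hk2n, fun h => by have := Del_fx h; omega⟩,
        ⟨mem_EG_dg hk1n hk2n, fun h => by have := Del_dx h; omega⟩,
        List.isChain_singleton _⟩
  · intro w hw
    cases b
    · have hdl : (gtail k false).dropLast =
          [Vtx.a (k+1), Vtx.b (k+1), Vtx.e (k+1), Vtx.d (k+1)] := rfl
      rw [hdl] at hw
      simp only [List.mem_cons, List.not_mem_nil, or_false] at hw
      rcases hw with rfl | rfl | rfl | rfl
      exacts [notS_a, notS_b, notS_e, notS_d]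
    · have hdl : (gtail k true).dropLast =
          [Vtx.a (k+1), Vtx.c (k+1), Vtx.f (k+1), Vtx.d (k+1)] := rfl
      rw [hdl] at hw
      simp only [List.mem_cons, List.not_mem_nil, or_false] at hw
      rcases hw with rfl | rfl | rfl | rfl
      exacts [notS_a, notS_c, notS_f, notS_d]
  · cases b <;> rfl

lemma legal_nmove {σ : ℕ → Bool} {k : ℕ} (hn2 : 2 ≤ n) (hkn : k + 1 = n)
    {i : ℕ} (hi1 : 1 ≤ i) (hi2 : i ≤ m) (b : Bool) :
    LegalMoveVia (Cset n m) (Rrel lit m) (Vtx.g k) (Ek n m σ k) (Vtx.z i)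
      (Ek n m σ k \ pathEdges (fullpath k b i)) (fullpath k b i) := by
  have hkn1 : k ≤ n - 1 := by omega
  have hshape : fullpath k b i =
      Vtx.g k :: (gtail k b ++ (xchain 1 (i-1) ++ [Vtx.y i, Vtx.z i])) := by
    simp [fullpath]
  have hnd := fullpath_nodup (k := k) (b := b) hi1
  have hch := fullpath_chain' (σ := σ) (b := b) hn2 hkn hi1 hi2
  rw [hshape] at hnd hch
  have h := legal_of_parts (C := Cset n m) (R := Rrel lit m) (v := Vtx.z i)
    (q := gtail k b ++ (xchain 1 (i-1) ++ [Vtx.y i, Vtx.z i]))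
    (by cases b <;> simp [gtail]) (mem_Cset_g hkn1) hnd hch ?_ ?_
    (Or.inl (mem_Cset_z hi1 hi2))
  · rw [hshape]; exact h
  · intro v hv
    have hdl : (gtail k b ++ (xchain 1 (i-1) ++ [Vtx.y i, Vtx.z i])).dropLast =
        gtail k b ++ (xchain 1 (i-1) ++ [Vtx.y i]) := by
      rw [List.dropLast_append_of_ne_nil (l := xchain 1 (i-1) ++ [Vtx.y i, Vtx.z i]) (by simp),
        List.dropLast_append_of_ne_nil (l := [Vtx.y i, Vtx.z i]) (by simp)]
      simp
    rw [hdl] at hv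
    simp only [List.mem_append, List.mem_singleton] at hv
    rcases hv with hv | hv | rfl
    · -- in gtail
      cases b <;> simp only [gtail, List.mem_cons, List.not_mem_nil, or_false] at hv <;>
        rcases hv with rfl | rfl | rfl | rfl | rfl <;>
        first
          | exact notS_a | exact notS_b | exact notS_c | exact notS_d
          | exact notS_e | exact notS_f
          | (intro hS; have := S_g.mp hS; omega)
    · obtain ⟨j, _, _, rfl⟩ := mem_xchain hv
      exact notS_x
    · exact notS_y
  · have : gtail k b ++ (xchain 1 (i-1) ++ [Vtx.y i, Vtx.z i]) =
        (gtail k b ++ (xchain 1 (i-1) ++ [Vtx.y i])) ++ [Vtx.z i] := by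
      simp
    rw [this, List.getLast?_concat]

/-! #### Winning at `z i` -/

lemma zwin {σ : ℕ → Bool} {i : ℕ} (hwf : LitWF n m lit)
    (hi1 : 1 ≤ i) (hi2 : i ≤ m) (hC : ClauseTrue lit i σ) :
    MoverWins (Cset n m) (Rrel lit m) true (Vtx.z i) (Efin n m σ i) := by
  have hzw : (Vtx.z i, Vtx.w i 1) ∈ Efin n m σ i :=
    ⟨⟨mem_EG_zw hi1 hi2, notDel_zv⟩, notXDel_z⟩
  have hw12 : (Vtx.w i 1, Vtx.w i 2) ∈ Efin n m σ i :=
    ⟨⟨mem_EG_w12 hi1 hi2, notDel_wv⟩, notXDel_w⟩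
  have hw23 : (Vtx.w i 2, Vtx.w i 3) ∈ Efin n m σ i :=
    ⟨⟨mem_EG_w23 hi1 hi2, notDel_wv⟩, notXDel_w⟩
  by_cases h1 : (lit i 1).eval σ = true
  · have halive : Vtx.w i 1 ∈ Rinv (Rrel lit m) (Efin n m σ i) :=
      (w_alive_iff hwf hi1 hi2 (by omega) (by omega)).mpr h1
    refine MoverWins.winsNow ⟨_, legal_of_parts (q := [Vtx.w i 1]) (by simp)
      (mem_Cset_z hi1 hi2) (by simp) ?_ (by simp) rfl (Or.inr halive)⟩ halive
    simp only [List.Chain', List.isChain_cons_cons, List.isChain_singleton, and_true]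
    exact hzw
  · have hdead1 : Vtx.w i 1 ∉ Cset n m ∪ Rinv (Rrel lit m) (Efin n m σ i) := by
      rw [S_w, w_alive_iff hwf hi1 hi2 (by omega) (by omega)]
      exact h1
    by_cases h2 : (lit i 2).eval σ = true
    · have halive : Vtx.w i 2 ∈ Rinv (Rrel lit m) (Efin n m σ i) :=
        (w_alive_iff hwf hi1 hi2 (by omega) (by omega)).mpr h2
      refine MoverWins.winsNow ⟨_, legal_of_parts (q := [Vtx.w i 1, Vtx.w i 2])
        (by simp) (mem_Cset_z hi1 hi2) (by simp) ?_ ?_ (by simp) (Or.inr halive)⟩ halive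
      · simp only [List.Chain', List.isChain_cons_cons, List.isChain_singleton, and_true]
        exact ⟨hzw, hw12⟩
      · intro w hw
        simp at hw
        subst hw
        exact hdead1
    · have hdead2 : Vtx.w i 2 ∉ Cset n m ∪ Rinv (Rrel lit m) (Efin n m σ i) := by
        rw [S_w, w_alive_iff hwf hi1 hi2 (by omega) (by omega)]
        exact h2
      obtain ⟨j, hj1, hj3, hev⟩ := hC
      have hj : j = 1 ∨ j = 2 ∨ j = 3 := by omega
      rcases hj with rfl | rfl | rfl
      · exact absurd hev h1
      · exact absurd hev h2
      · have halive : Vtx.w i 3 ∈ Rinv (Rrel lit m) (Efin n m σ i) :=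
          (w_alive_iff hwf hi1 hi2 (by omega) (by omega)).mpr hev
        refine MoverWins.winsNow ⟨_, legal_of_parts
          (q := [Vtx.w i 1, Vtx.w i 2, Vtx.w i 3])
          (by simp) (mem_Cset_z hi1 hi2) (by simp) ?_ ?_ (by simp) (Or.inr halive)⟩ halive
        · simp only [List.Chain', List.isChain_cons_cons, List.isChain_singleton, and_true]
          exact ⟨hzw, hw12, hw23⟩
        · intro w hw
          simp at hw
          rcases hw with rfl | rfl
          · exact hdead1
          · exact hdead2


/-! #### Packaged move classification -/

lemma Ek_sub {σ : ℕ → Bool} {k : ℕ} : Ek n m σ k ⊆ EG n m := fun _ he => he.1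

lemma Efin_sub {σ : ℕ → Bool} {i : ℕ} : Efin n m σ i ⊆ EG n m := fun _ he => he.1.1

lemma gtail_getLast (k : ℕ) (b : Bool) : (gtail k b).getLast? = some (Vtx.g (k+1)) := by
  cases b <;> rfl

lemma fullpath_tail_getLast (k i : ℕ) (b : Bool) :
    (gtail k b ++ (xchain 1 (i-1) ++ [Vtx.y i, Vtx.z i])).getLast? = some (Vtx.z i) := by
  have h : gtail k b ++ (xchain 1 (i-1) ++ [Vtx.y i, Vtx.z i]) =
      (gtail k b ++ (xchain 1 (i-1) ++ [Vtx.y i])) ++ [Vtx.z i] := by simp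
  rw [h, List.getLast?_concat]

lemma gmove_step {σ : ℕ → Bool} {k : ℕ} (b : Bool) :
    Ek n m σ k \ pathEdges (Vtx.g k :: gtail k b) =
      Ek n m (Function.update σ (k+1) b) (k+1) := by
  rw [pathEdges_gtail, ← Ek_succ]

lemma Efin_step {σ : ℕ → Bool} {k i : ℕ} (hkn : k + 1 = n) (hi : 1 ≤ i) (b : Bool) :
    Ek n m σ k \ pathEdges (fullpath k b i) =
      Efin n m (Function.update σ (k+1) b) i := by
  subst hkn
  ext e
  simp only [Efin, Ek, Set.mem_diff, mem_pathEdges_fullpath hi]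
  rw [Del_succ]
  simp only [Set.mem_union]
  tauto

lemma classify_gmove {σ : ℕ → Bool} {k : ℕ} {v : Vtx} {E' : Set Edge} (hn2 : 2 ≤ n)
    (hk : k + 1 ≤ n - 1)
    (h : LegalMove (Cset n m) (Rrel lit m) (Vtx.g k) (Ek n m σ k) v E') :
    ∃ b, v = Vtx.g (k+1) ∧ E' = Ek n m (Function.update σ (k+1) b) (k+1) := by
  obtain ⟨p, hvia⟩ := h
  obtain ⟨q, rfl, hw, hlast, hE'⟩ := walk_of_legal hvia
  obtain ⟨b, hcase⟩ := walk_from_g Ek_sub hn2 (by omega) hw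
  rcases hcase with ⟨_, rfl⟩ | ⟨hk1, _⟩
  · refine ⟨b, ?_, ?_⟩
    · rw [gtail_getLast] at hlast
      exact (Option.some.injEq _ _ ▸ hlast).symm
    · rw [hE', gmove_step]
  · omega

lemma classify_nmove {σ : ℕ → Bool} {k : ℕ} {v : Vtx} {E' : Set Edge} (hn2 : 2 ≤ n)
    (hkn : k + 1 = n)
    (h : LegalMove (Cset n m) (Rrel lit m) (Vtx.g k) (Ek n m σ k) v E') :
    ∃ b i, 1 ≤ i ∧ i ≤ m ∧ v = Vtx.z i ∧
      E' = Efin n m (Function.update σ (k+1) b) i := by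
  obtain ⟨p, hvia⟩ := h
  obtain ⟨q, rfl, hw, hlast, hE'⟩ := walk_of_legal hvia
  obtain ⟨b, hcase⟩ := walk_from_g Ek_sub hn2 (by omega) hw
  rcases hcase with ⟨hk1, rfl⟩ | ⟨_, i, hi1, hi2, hfp⟩
  · omega
  · have hq : q = gtail k b ++ (xchain 1 (i-1) ++ [Vtx.y i, Vtx.z i]) := by
      have h2 : fullpath k b i =
          Vtx.g k :: (gtail k b ++ (xchain 1 (i-1) ++ [Vtx.y i, Vtx.z i])) := by
        simp [fullpath]
      rw [h2] at hfp
      exact (List.cons.injEq _ _ _ _ ▸ hfp).2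
    subst hq
    rw [fullpath_tail_getLast] at hlast
    obtain rfl : v = Vtx.z i := (Option.some.injEq _ _ ▸ hlast).symm
    refine ⟨b, i, hi1, hi2, rfl, ?_⟩
    rw [hE']
    have h3 : Vtx.g k :: (gtail k b ++ (xchain 1 (i-1) ++ [Vtx.y i, Vtx.z i])) =
        fullpath k b i := by simp [fullpath]
    rw [h3, Efin_step hkn hi1]

lemma clause_of_zmove {σ : ℕ → Bool} {i : ℕ} {v : Vtx} {E' : Set Edge}
    (hwf : LitWF n m lit) (hi1 : 1 ≤ i) (hi2 : i ≤ m)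
    (h : LegalMove (Cset n m) (Rrel lit m) (Vtx.z i) (Efin n m σ i) v E') :
    ClauseTrue lit i σ := by
  obtain ⟨p, hvia⟩ := h
  obtain ⟨q, rfl, hw, -, -⟩ := walk_of_legal hvia
  obtain ⟨j, hj1, hj3, halive⟩ := walk_from_z Efin_sub hw
  exact ⟨j, hj1, hj3, (w_alive_iff hwf hi1 hi2 hj1 hj3).mp halive⟩

/-! #### The main induction -/

lemma main_ind (hn : Even n) (hn2 : 2 ≤ n) (hm : 1 ≤ m) (hwf : LitWF n m lit) :
    ∀ d k σ, k + 1 + d = n →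
      (MoverWins (Cset n m) (Rrel lit m) (decide (k % 2 = 0)) (Vtx.g k) (Ek n m σ k) ↔
        QAux (FTrue lit m) (k+1) (n - k) σ) := by
  have hnpar : n % 2 = 0 := Nat.even_iff.mp hn
  intro d
  induction d with
  | zero =>
    intro k σ hkd
    have hkn : k + 1 = n := by omega
    have hflag : decide (k % 2 = 0) = false := decide_eq_false (by omega)
    have hnk : n - k = 1 := by omega
    rw [hflag, hnk]
    simp only [QAux]
    rw [if_neg (by omega : ¬ ((k + 1) % 2 = 1))]
    constructor
    · intro h
      cases h with
      | loses h1 h2 =>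
        intro b i0 hi01 hi02
        have hmv := legal_nmove (lit := lit) (σ := σ) hn2 hkn hi01 hi02 b
        have hWin := h2 _ _ ⟨_, hmv⟩
        rw [Efin_step hkn hi01] at hWin
        cases hWin with
        | winsNow hLM _ => exact clause_of_zmove hwf hi01 hi02 hLM
        | winsLater hLM _ => exact clause_of_zmove hwf hi01 hi02 hLM
    · intro hQ
      refine MoverWins.loses ?_ ?_
      · intro v E' hLM
        obtain ⟨b, i, hi1, hi2, rfl, -⟩ := classify_nmove hn2 hkn hLM
        exact notRinv_z
      · intro v E' hLM
        obtain ⟨b, i, hi1, hi2, rfl, rfl⟩ := classify_nmove hn2 hkn hLM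
        exact zwin hwf hi1 hi2 (hQ b i hi1 hi2)
  | succ d ih =>
    intro k σ hkd
    have hk1 : k + 1 ≤ n - 1 := by omega
    have hnk : n - k = (n - (k+1)) + 1 := by omega
    rw [hnk]
    simp only [QAux]
    by_cases hk2 : k % 2 = 0
    · rw [decide_eq_true hk2, if_pos (by omega : (k + 1) % 2 = 1)]
      constructor
      · intro h
        cases h with
        | winsNow hLM hRin =>
          obtain ⟨b, rfl, -⟩ := classify_gmove hn2 hk1 hLM
          exact absurd hRin notRinv_g
        | winsLater hLM hnext =>
          obtain ⟨b, rfl, rfl⟩ := classify_gmove hn2 hk1 hLM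
          refine ⟨b, ?_⟩
          have hih := ih (k+1) (Function.update σ (k+1) b) (by omega)
          rw [decide_eq_false (by omega : ¬ ((k+1) % 2 = 0))] at hih
          exact hih.mp hnext
      · rintro ⟨b, hb⟩
        refine MoverWins.winsLater ⟨_, legal_gmove hk1 hn2 b⟩ ?_
        rw [gmove_step]
        have hih := ih (k+1) (Function.update σ (k+1) b) (by omega)
        rw [decide_eq_false (by omega : ¬ ((k+1) % 2 = 0))] at hih
        exact hih.mpr hb
    · rw [decide_eq_false hk2, if_neg (by omega : ¬ ((k + 1) % 2 = 1))]
      constructor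
      · intro h
        cases h with
        | loses h1 h2 =>
          intro b
          have hnext := h2 _ _ ⟨_, legal_gmove (σ := σ) hk1 hn2 b⟩
          rw [gmove_step] at hnext
          have hih := ih (k+1) (Function.update σ (k+1) b) (by omega)
          rw [decide_eq_true (by omega : (k+1) % 2 = 0)] at hih
          exact hih.mp hnext
      · intro hQ
        refine MoverWins.loses ?_ ?_
        · intro v E' hLM
          obtain ⟨b, rfl, -⟩ := classify_gmove hn2 hk1 hLM
          exact notRinv_g
        · intro v E' hLM
          obtain ⟨b, rfl, rfl⟩ := classify_gmove hn2 hk1 hLM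
          have hih := ih (k+1) (Function.update σ (k+1) b) (by omega)
          rw [decide_eq_true (by omega : (k+1) % 2 = 0)] at hih
          exact hih.mpr (hQ b)

lemma Del_zero (σ : ℕ → Bool) : Del σ 0 = ∅ := by
  ext e
  simp [Del]

end Aux

/-- In the graph game on `(G, C, s, R)` constructed from the restricted
quantified Boolean formula `Q`, the ∃-player (who moves first, from `s = g₀`, with
initial edge set `E(G)`) has a winning strategy if and only if `Q` is true. -/
theorem existsPlayer_wins_iff_qbf_true
    (n m : ℕ) (hn : Even n) (hn2 : 2 ≤ n) (hm : 1 ≤ m)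
    (lit : ℕ → ℕ → Lit) (hwf : LitWF n m lit) :
    MoverWins (Cset n m) (Rrel lit m) true (Vtx.g 0) (EG n m) ↔ QTrue n m lit := by
  have hEG : EG n m = Ek n m (fun _ => false) 0 := by
    rw [Ek, Del_zero, Set.diff_empty]
  have h := main_ind hn hn2 hm hwf (n - 1) 0 (fun _ => false) (by omega)
  rw [decide_eq_true (by omega : 0 % 2 = 0)] at h
  rw [hEG]
  simpa [QTrue] using h

end PhutballQBF
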